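/- The operator S = 1 − |φ⁺⟩⟨φ⁺|^{A_I B_I¹} ⊗ |𝟙⟩⟩⟨⟨𝟙|^{A_O B_I²} satisfies: (a) tr_{A_O}(S) ⪰ 0 and (b) S^{T_{A_I}} ⪰ 0, where |𝟙⟩⟩ = Σ_i |ii⟩ is the un-normalized maximally entangled vector on A_O ⊗ B_I² with all local dimensions equal to d. -/

import Mathlib

open Matrix ComplexOrder

private lemma normSq_sum_le' {ι : Type*} (s : Finset ι) (f : ι → ℂ) :
    Complex.normSq (∑ i ∈ s, f i) ≤ s.card * ∑ i ∈ s, Complex.normSq (f i) := by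
  have h1 : ‖∑ i ∈ s, f i‖ ≤ ∑ i ∈ s, ‖f i‖ :=
    norm_sum_le _ _
  have h2 : (∑ i ∈ s, ‖f i‖)^2 ≤ s.card * ∑ i ∈ s, (‖f i‖)^2 :=
    sq_sum_le_card_mul_sum_sq
  calc Complex.normSq (∑ i ∈ s, f i) = (‖∑ i ∈ s, f i‖)^2 := (Complex.sq_norm _).symm
    _ ≤ (∑ i ∈ s, ‖f i‖)^2 := by
        apply pow_le_pow_left₀ (norm_nonneg _) h1
    _ ≤ s.card * ∑ i ∈ s, (‖f i‖)^2 := h2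
    _ = s.card * ∑ i ∈ s, Complex.normSq (f i) := by simp [Complex.sq_norm]

private lemma normSq_sum_le (d : ℕ) (f : Fin d → ℂ) :
    Complex.normSq (∑ i, f i) ≤ d * ∑ i, Complex.normSq (f i) := by
  simpa using normSq_sum_le' Finset.univ f

private lemma re_conj_mul_le (u w : ℂ) :
    ((starRingEnd ℂ) u * w).re ≤ (Complex.normSq u + Complex.normSq w) / 2 := by
  have h1 := Complex.re_le_norm ((starRingEnd ℂ) u * w)
  rw [norm_mul, Complex.norm_conj] at h1
  have h2 : ‖u‖ * ‖w‖
      ≤ (Complex.normSq u + Complex.normSq w) / 2 := by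
    nlinarith [Complex.sq_norm u, Complex.sq_norm w,
      sq_nonneg (‖u‖ - ‖w‖)]
  linarith

/-- For `S = 1 - |φ⁺⟩⟨φ⁺|^{A_I B_I¹} ⊗ |𝟙⟩⟩⟨⟨𝟙|^{A_O B_I²}` (all local dimensions `d`,
factor order `A_I, A_O, B_I¹, B_I²`): (a) the partial trace of `S` over `A_O` is
positive semidefinite, and (b) the partial transpose of `S` on `A_I` is positive
semidefinite. -/
theorem stmt_4 (d : ℕ) (hd : 1 ≤ d)
    (v : Fin d × Fin d × Fin d × Fin d → ℂ)
    (hv : v = fun p => if p.1 = p.2.2.1 ∧ p.2.1 = p.2.2.2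
      then ((Real.sqrt d : ℂ))⁻¹ else 0)
    (S : Matrix (Fin d × Fin d × Fin d × Fin d) (Fin d × Fin d × Fin d × Fin d) ℂ)
    (hS : S = 1 - Matrix.vecMulVec v (star v)) :
    (Matrix.of fun p q : Fin d × Fin d × Fin d =>
        ∑ a : Fin d, S (p.1, a, p.2.1, p.2.2) (q.1, a, q.2.1, q.2.2)).PosSemidef ∧
    (Matrix.of fun p q : Fin d × Fin d × Fin d × Fin d =>
        S (q.1, p.2.1, p.2.2.1, p.2.2.2) (p.1, q.2.1, q.2.2.1, q.2.2.2)).PosSemidef := by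
  have hdR : (1:ℝ) ≤ (d:ℝ) := by exact_mod_cast hd
  have hdR0 : (0:ℝ) < (d:ℝ) := lt_of_lt_of_le one_pos hdR
  have hc : ((Real.sqrt d : ℂ))⁻¹ * (starRingEnd ℂ) ((Real.sqrt d : ℂ))⁻¹ = ((d:ℂ))⁻¹ := by
    rw [map_inv₀, Complex.conj_ofReal, ← mul_inv, ← Complex.ofReal_mul,
      Real.mul_self_sqrt (by positivity)]
    simp
  constructor
  · -- part (a)
    set T : Matrix (Fin d × Fin d × Fin d) (Fin d × Fin d × Fin d) ℂ :=
      Matrix.of fun p q : Fin d × Fin d × Fin d =>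
        ∑ a : Fin d, S (p.1, a, p.2.1, p.2.2) (q.1, a, q.2.1, q.2.2) with hT
    have hTa : ∀ p q : Fin d × Fin d × Fin d,
        T p q = (if p = q then (d:ℂ) else 0)
          - (if p.1 = p.2.1 ∧ q.1 = q.2.1 ∧ p.2.2 = q.2.2 then ((d:ℂ))⁻¹ else 0) := by
      intro p q
      rw [hT]
      show (∑ a : Fin d, S (p.1, a, p.2.1, p.2.2) (q.1, a, q.2.1, q.2.2)) = _
      subst hS hv
      simp only [Matrix.sub_apply, Matrix.one_apply, Matrix.vecMulVec_apply, Pi.star_apply,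
        RCLike.star_def, Finset.sum_sub_distrib]
      congr 1
      · rcases eq_or_ne p q with h | h
        · subst h; simp [Prod.ext_iff]
        · rw [if_neg h]
          rw [Finset.sum_eq_zero]
          intro a _
          rw [if_neg]
          intro hh
          rw [Prod.mk.injEq, Prod.mk.injEq, Prod.mk.injEq] at hh
          exact h (Prod.ext hh.1 (Prod.ext hh.2.2.1 hh.2.2.2))
      · have key : ∀ a : Fin d,
            (if p.1 = p.2.1 ∧ a = p.2.2 then ((Real.sqrt d : ℂ))⁻¹ else 0) *
            (starRingEnd ℂ) (if q.1 = q.2.1 ∧ a = q.2.2 then ((Real.sqrt d : ℂ))⁻¹ else 0)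
            = if a = p.2.2 then
                (if p.1 = p.2.1 ∧ q.1 = q.2.1 ∧ p.2.2 = q.2.2 then ((d:ℂ))⁻¹ else 0)
              else 0 := by
          intro a
          split_ifs with h1 h2 h3 h4 h5 h6 <;> simp_all [hc]
        simp only [key, Finset.sum_ite_eq' Finset.univ p.2.2, Finset.mem_univ, if_true]
    have hherm : T.IsHermitian := by
      refine Matrix.IsHermitian.ext fun p q => ?_
      rw [hTa p q, hTa q p]
      show (starRingEnd ℂ) _ = _
      rw [map_sub]
      congr 1
      · rw [apply_ite (starRingEnd ℂ)]
        simp [eq_comm]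
      · rw [apply_ite (starRingEnd ℂ)]
        simp only [map_inv₀, Complex.conj_natCast, map_zero]
        apply if_congr _ rfl rfl
        tauto
    rw [Matrix.posSemidef_iff_dotProduct_mulVec]
    refine ⟨hherm, fun x => ?_⟩
    have hq : star x ⬝ᵥ T *ᵥ x
        = (d:ℂ) * ∑ p, (starRingEnd ℂ) (x p) * x p
          - (d:ℂ)⁻¹ * ∑ b : Fin d,
              (starRingEnd ℂ) (∑ a, x (a,a,b)) * (∑ a, x (a,a,b)) := by
      simp only [dotProduct, Matrix.mulVec, Pi.star_apply, RCLike.star_def]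
      calc ∑ p, (starRingEnd ℂ) (x p) * ∑ q, T p q * x q
          = ∑ p : Fin d × Fin d × Fin d, (starRingEnd ℂ) (x p) *
              ∑ q : Fin d × Fin d × Fin d,
                ((if p = q then (d:ℂ) else 0)
                  - (if p.1 = p.2.1 ∧ q.1 = q.2.1 ∧ p.2.2 = q.2.2
                      then ((d:ℂ))⁻¹ else 0)) * x q := by
            refine Finset.sum_congr rfl fun p _ => ?_
            congr 1
            exact Finset.sum_congr rfl fun q _ => by rw [hTa]
        _ = _ := by
            simp only [sub_mul, mul_sub, Finset.sum_sub_distrib]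
            congr 1
            · simp only [mul_ite, ite_mul, mul_zero, zero_mul, Finset.sum_ite_eq,
                Finset.mem_univ, if_true, Finset.mul_sum]
              exact Finset.sum_congr rfl fun p _ => by ring
            · simp only [Fintype.sum_prod_type, ite_and, mul_ite, ite_mul, mul_zero, zero_mul,
                Finset.sum_ite_eq, Finset.sum_ite_eq', Finset.mem_univ, if_true, Finset.mul_sum,
                Finset.sum_mul, map_sum, Finset.sum_ite_irrel, Finset.sum_const_zero]
              rw [Finset.sum_comm]
              apply Finset.sum_congr rfl; intro b _
              rw [Finset.sum_comm]
              apply Finset.sum_congr rfl; intro i _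
              apply Finset.sum_congr rfl; intro j _
              ring
    rw [hq]
    have hre : (d:ℂ) * ∑ p, (starRingEnd ℂ) (x p) * x p
          - (d:ℂ)⁻¹ * ∑ b : Fin d,
              (starRingEnd ℂ) (∑ a, x (a,a,b)) * (∑ a, x (a,a,b))
        = (((d:ℝ) * ∑ p, Complex.normSq (x p)
            - (d:ℝ)⁻¹ * ∑ b : Fin d, Complex.normSq (∑ a, x (a,a,b)) : ℝ) : ℂ) := by
      simp only [← Complex.normSq_eq_conj_mul_self]
      push_cast
      ring
    rw [hre, Complex.zero_le_real]
    -- real inequality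
    set A : ℝ := ∑ p, Complex.normSq (x p) with hA
    have hA0 : 0 ≤ A := Finset.sum_nonneg fun p _ => Complex.normSq_nonneg _
    have hB : ∑ b : Fin d, Complex.normSq (∑ a, x (a,a,b))
        ≤ (d:ℝ) * ∑ b : Fin d, ∑ a, Complex.normSq (x (a,a,b)) := by
      rw [Finset.mul_sum]
      exact Finset.sum_le_sum fun b _ => normSq_sum_le d _
    have hC : ∑ b : Fin d, ∑ a, Complex.normSq (x (a,a,b)) ≤ A := by
      rw [hA, Fintype.sum_prod_type, Finset.sum_comm]
      refine Finset.sum_le_sum fun a _ => ?_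
      have hnn : ∀ p2 ∈ Finset.univ, 0 ≤ ∑ p3 : Fin d, Complex.normSq (x (a, p2, p3)) :=
        fun p2 _ => Finset.sum_nonneg fun p3 _ => Complex.normSq_nonneg _
      have := Finset.single_le_sum hnn (Finset.mem_univ a)
      calc ∑ b : Fin d, Complex.normSq (x (a,a,b))
          ≤ ∑ p2 : Fin d, ∑ p3 : Fin d, Complex.normSq (x (a, p2, p3)) := this
        _ = ∑ p : Fin d × Fin d, Complex.normSq (x (a, p.1, p.2)) := by
            rw [Fintype.sum_prod_type]
    have h1 : (d:ℝ)⁻¹ * (∑ b : Fin d, Complex.normSq (∑ a, x (a,a,b))) ≤ A := by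
      have h2 : ∑ b : Fin d, Complex.normSq (∑ a, x (a,a,b)) ≤ (d:ℝ) * A :=
        hB.trans (mul_le_mul_of_nonneg_left hC (le_of_lt hdR0))
      calc (d:ℝ)⁻¹ * (∑ b : Fin d, Complex.normSq (∑ a, x (a,a,b)))
          ≤ (d:ℝ)⁻¹ * ((d:ℝ) * A) := by
            exact mul_le_mul_of_nonneg_left h2 (by positivity)
        _ = A := by field_simp
    have h3 : A ≤ (d:ℝ) * A := by nlinarith
    linarith
  · -- part (b)
    set N : Matrix (Fin d × Fin d × Fin d × Fin d) (Fin d × Fin d × Fin d × Fin d) ℂ :=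
      Matrix.of fun p q : Fin d × Fin d × Fin d × Fin d =>
        S (q.1, p.2.1, p.2.2.1, p.2.2.2) (p.1, q.2.1, q.2.2.1, q.2.2.2) with hN
    have hNa : ∀ p q : Fin d × Fin d × Fin d × Fin d,
        N p q = (if p = q then 1 else 0)
          - (if q.1 = p.2.2.1 ∧ p.2.1 = p.2.2.2 ∧ p.1 = q.2.2.1 ∧ q.2.1 = q.2.2.2
              then ((d:ℂ))⁻¹ else 0) := by
      intro p q
      rw [hN]
      show S (q.1, p.2.1, p.2.2.1, p.2.2.2) (p.1, q.2.1, q.2.2.1, q.2.2.2) = _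
      subst hS hv
      simp only [Matrix.sub_apply, Matrix.one_apply, Matrix.vecMulVec_apply, Pi.star_apply,
        RCLike.star_def]
      congr 1
      · apply if_congr _ rfl rfl
        rw [Prod.mk.injEq, Prod.mk.injEq, Prod.mk.injEq, Prod.ext_iff, Prod.ext_iff,
          Prod.ext_iff]
        constructor
        · rintro ⟨h1, h2, h3, h4⟩; exact ⟨h1.symm, h2, h3, h4⟩
        · rintro ⟨h1, h2, h3, h4⟩; exact ⟨h1.symm, h2, h3, h4⟩
      · split_ifs with h1 h2 h3 h4 h5 h6 <;> simp_all [hc]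
    have hherm : N.IsHermitian := by
      refine Matrix.IsHermitian.ext fun p q => ?_
      rw [hNa p q, hNa q p]
      show (starRingEnd ℂ) _ = _
      rw [map_sub]
      congr 1
      · rw [apply_ite (starRingEnd ℂ)]
        simp [eq_comm]
      · rw [apply_ite (starRingEnd ℂ)]
        simp only [map_inv₀, Complex.conj_natCast, map_zero]
        apply if_congr _ rfl rfl
        tauto
    rw [Matrix.posSemidef_iff_dotProduct_mulVec]
    refine ⟨hherm, fun x => ?_⟩
    set y : Fin d → Fin d → ℂ := fun a b => ∑ α, x (a, α, b, α) with hy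
    have hq : star x ⬝ᵥ N *ᵥ x
        = (∑ p, (starRingEnd ℂ) (x p) * x p)
          - (d:ℂ)⁻¹ * ∑ a : Fin d, ∑ b : Fin d, (starRingEnd ℂ) (y a b) * (y b a) := by
      simp only [dotProduct, Matrix.mulVec, Pi.star_apply, RCLike.star_def]
      calc ∑ p, (starRingEnd ℂ) (x p) * ∑ q, N p q * x q
          = ∑ p : Fin d × Fin d × Fin d × Fin d, (starRingEnd ℂ) (x p) *
              ∑ q : Fin d × Fin d × Fin d × Fin d,
                ((if p = q then (1:ℂ) else 0)
                  - (if q.1 = p.2.2.1 ∧ p.2.1 = p.2.2.2 ∧ p.1 = q.2.2.1 ∧ q.2.1 = q.2.2.2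
                      then ((d:ℂ))⁻¹ else 0)) * x q := by
            refine Finset.sum_congr rfl fun p _ => ?_
            congr 1
            exact Finset.sum_congr rfl fun q _ => by rw [hNa]
        _ = _ := by
            simp only [sub_mul, mul_sub, Finset.sum_sub_distrib]
            congr 1
            · simp only [mul_ite, ite_mul, mul_zero, zero_mul, one_mul, Finset.sum_ite_eq,
                Finset.mem_univ, if_true]
            · simp only [hy, Fintype.sum_prod_type, ite_and, mul_ite, ite_mul, mul_zero,
                zero_mul, Finset.sum_ite_eq, Finset.sum_ite_eq', Finset.mem_univ, if_true,
                Finset.mul_sum, Finset.sum_mul, map_sum, Finset.sum_ite_irrel,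
                Finset.sum_const_zero]
              apply Finset.sum_congr rfl; intro a _
              rw [Finset.sum_comm]
              apply Finset.sum_congr rfl; intro b _
              rw [Finset.sum_comm]
              apply Finset.sum_congr rfl; intro β _
              apply Finset.sum_congr rfl; intro α _
              ring
    rw [hq]
    set W : ℂ := ∑ a : Fin d, ∑ b : Fin d, (starRingEnd ℂ) (y a b) * (y b a) with hW
    have hWc : (starRingEnd ℂ) W = W := by
      rw [hW, map_sum, Finset.sum_comm]
      apply Finset.sum_congr rfl; intro a _
      rw [map_sum]
      apply Finset.sum_congr rfl; intro b _
      rw [_root_.map_mul, Complex.conj_conj]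
      ring
    have hWre : ((W.re : ℝ) : ℂ) = W := Complex.conj_eq_iff_re.mp hWc
    have hre : (∑ p, (starRingEnd ℂ) (x p) * x p) - (d:ℂ)⁻¹ * W
        = (((∑ p, Complex.normSq (x p)) - (d:ℝ)⁻¹ * W.re : ℝ) : ℂ) := by
      push_cast
      rw [hWre]
      simp only [← Complex.normSq_eq_conj_mul_self]
    rw [hre, Complex.zero_le_real]
    -- real inequality for part (b)
    set A : ℝ := ∑ p, Complex.normSq (x p) with hA
    have hA0 : 0 ≤ A := Finset.sum_nonneg fun p _ => Complex.normSq_nonneg _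
    set C : ℝ := ∑ a : Fin d, ∑ b : Fin d, Complex.normSq (y a b) with hCdef
    have hWreC : W.re ≤ C := by
      have hkey : 2 * W.re ≤ 2 * C := by
        calc 2 * W.re
            = ∑ a : Fin d, ∑ b : Fin d, 2 * ((starRingEnd ℂ) (y a b) * (y b a)).re := by
              rw [hW, Complex.re_sum, Finset.mul_sum]
              refine Finset.sum_congr rfl fun a _ => ?_
              rw [Complex.re_sum, Finset.mul_sum]
          _ ≤ ∑ a : Fin d, ∑ b : Fin d,
                (Complex.normSq (y a b) + Complex.normSq (y b a)) := by
              refine Finset.sum_le_sum fun a _ => Finset.sum_le_sum fun b _ => ?_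
              have := re_conj_mul_le (y a b) (y b a)
              linarith
          _ = 2 * C := by
              simp only [Finset.sum_add_distrib]
              rw [show (∑ a : Fin d, ∑ b : Fin d, Complex.normSq (y b a))
                  = ∑ a : Fin d, ∑ b : Fin d, Complex.normSq (y a b) from
                Finset.sum_comm, hCdef]
              ring
      linarith
    have hCD : C ≤ (d:ℝ) * ∑ a : Fin d, ∑ b : Fin d, ∑ α : Fin d,
        Complex.normSq (x (a, α, b, α)) := by
      rw [hCdef, Finset.mul_sum]
      refine Finset.sum_le_sum fun a _ => ?_
      rw [Finset.mul_sum]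
      exact Finset.sum_le_sum fun b _ => normSq_sum_le d _
    have hDA : (∑ a : Fin d, ∑ b : Fin d, ∑ α : Fin d, Complex.normSq (x (a, α, b, α))) ≤ A := by
      rw [hA, Fintype.sum_prod_type]
      refine Finset.sum_le_sum fun a _ => ?_
      rw [Finset.sum_comm]
      rw [show (∑ p : Fin d × Fin d × Fin d, Complex.normSq (x (a, p.1, p.2.1, p.2.2)))
          = ∑ α : Fin d, ∑ b : Fin d, ∑ γ : Fin d, Complex.normSq (x (a, α, b, γ)) from by
        rw [Fintype.sum_prod_type]
        exact Finset.sum_congr rfl fun α _ => Fintype.sum_prod_type _]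
      refine Finset.sum_le_sum fun α _ => Finset.sum_le_sum fun b _ => ?_
      exact Finset.single_le_sum (f := fun γ => Complex.normSq (x (a, α, b, γ)))
        (fun γ _ => Complex.normSq_nonneg _) (Finset.mem_univ α)
    have h1 : (d:ℝ)⁻¹ * W.re ≤ A := by
      have h2 : W.re ≤ (d:ℝ) * A :=
        hWreC.trans (hCD.trans (mul_le_mul_of_nonneg_left hDA (le_of_lt hdR0)))
      calc (d:ℝ)⁻¹ * W.re ≤ (d:ℝ)⁻¹ * ((d:ℝ) * A) := by
            apply mul_le_mul_of_nonneg_left h2 (by positivity)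
        _ = A := by field_simp
    linarith
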